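/- Let n ≥ 1 be an integer, s ∈ (0,1], ε ≥ 0 and χ ∈ ℂⁿ. Then the map Γ_s^ε is differentiable at (χ,0), and the determinant of its derivative equals Jac(Γ_s^ε)(χ,0) = s^{2n+3}·|χ|²/3 + s^{2n+1}·ε²/4. -/

import Mathlib

open Real

noncomputable section

/-- determinant of a prod map -/
lemma det_prodMap_aux {M₁ M₂ : Type*} [AddCommGroup M₁] [Module ℝ M₁]
    [AddCommGroup M₂] [Module ℝ M₂] [FiniteDimensional ℝ M₁] [FiniteDimensional ℝ M₂]
    (f : M₁ →ₗ[ℝ] M₁) (g : M₂ →ₗ[ℝ] M₂) :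
    LinearMap.det (f.prodMap g) = LinearMap.det f * LinearMap.det g := by
  classical
  let b₁ := Module.finBasis ℝ M₁
  let b₂ := Module.finBasis ℝ M₂
  rw [← LinearMap.det_toMatrix (b₁.prod b₂), LinearMap.toMatrix_prodMap,
    Matrix.det_fromBlocks_zero₂₁, LinearMap.det_toMatrix, LinearMap.det_toMatrix]

/-- determinant of a shear map `(v,t) ↦ (v + t • w, t)` is 1. -/
lemma det_shear_aux {M : Type*} [AddCommGroup M] [Module ℝ M] [FiniteDimensional ℝ M]
    (w : M) :
    LinearMap.det (LinearMap.id (R := ℝ) (M := M × ℝ) +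
      (LinearMap.inl ℝ M ℝ) ∘ₗ ((LinearMap.snd ℝ M ℝ).smulRight w)) = 1 := by
  classical
  set S := LinearMap.id (R := ℝ) (M := M × ℝ) +
      (LinearMap.inl ℝ M ℝ) ∘ₗ ((LinearMap.snd ℝ M ℝ).smulRight w) with hS
  let b₁ := Module.finBasis ℝ M
  let b₂ := Module.Basis.singleton Unit ℝ
  rw [← LinearMap.det_toMatrix (b₁.prod b₂)]
  have : LinearMap.toMatrix (b₁.prod b₂) (b₁.prod b₂) S =
      Matrix.fromBlocks 1 (Matrix.of fun i (_ : Unit) => b₁.repr w i) 0 1 := by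
    ext (i | i) (j | j) <;>
      simp [S, LinearMap.toMatrix_apply, Module.Basis.prod_apply, Matrix.one_apply, b₂,
        Module.Basis.prod_repr_inl, Module.Basis.prod_repr_inr, Module.Basis.singleton_repr, Module.Basis.singleton_apply,
        Finsupp.single_apply, eq_comm]
  rw [this, Matrix.det_fromBlocks_zero₂₁, Matrix.det_one, Matrix.det_one, one_mul]

lemma det_L_aux {n : ℕ} (a lam : ℝ) (ha : a ≠ 0) (w : EuclideanSpace ℂ (Fin n)) :
    LinearMap.det ((((a • ContinuousLinearMap.fst ℝ (EuclideanSpace ℂ (Fin n)) ℝ) +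
        (ContinuousLinearMap.snd ℝ (EuclideanSpace ℂ (Fin n)) ℝ).smulRight w).prod
        (lam • ContinuousLinearMap.snd ℝ (EuclideanSpace ℂ (Fin n)) ℝ)).toLinearMap) =
      a ^ (2 * n) * lam := by
  classical
  have key : (((a • ContinuousLinearMap.fst ℝ (EuclideanSpace ℂ (Fin n)) ℝ) +
        (ContinuousLinearMap.snd ℝ (EuclideanSpace ℂ (Fin n)) ℝ).smulRight w).prod
        (lam • ContinuousLinearMap.snd ℝ (EuclideanSpace ℂ (Fin n)) ℝ)).toLinearMap =
      ((a • LinearMap.id (R := ℝ) (M := EuclideanSpace ℂ (Fin n))).prodMap (lam • LinearMap.id (R := ℝ) (M := ℝ))) ∘ₗ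
      (LinearMap.id (R := ℝ) (M := EuclideanSpace ℂ (Fin n) × ℝ) +
        (LinearMap.inl ℝ (EuclideanSpace ℂ (Fin n)) ℝ) ∘ₗ ((LinearMap.snd ℝ (EuclideanSpace ℂ (Fin n)) ℝ).smulRight (a⁻¹ • w))) := by
    apply LinearMap.ext
    rintro ⟨v, t⟩
    show ((a • v + t • w, lam * t) : EuclideanSpace ℂ (Fin n) × ℝ) = _
    simp only [LinearMap.coe_comp, Function.comp_apply, LinearMap.add_apply, LinearMap.id_apply,
      LinearMap.inl_apply, LinearMap.smulRight_apply, LinearMap.snd_apply,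
      LinearMap.prodMap_apply, LinearMap.smul_apply, Prod.fst_add, Prod.snd_add,
      smul_eq_mul, Prod.mk.injEq, smul_add, smul_smul, add_zero]
    refine ⟨by rw [mul_comm t, ← mul_assoc, mul_inv_cancel₀ ha, one_mul], trivial⟩
  rw [key, LinearMap.det_comp, det_shear_aux, mul_one, det_prodMap_aux,
    LinearMap.det_smul, LinearMap.det_smul, LinearMap.det_id,
    Module.finrank_self]
  have hE : Module.finrank ℝ (EuclideanSpace ℂ (Fin n)) = 2 * n := by
    rw [← Module.finrank_mul_finrank ℝ ℂ (EuclideanSpace ℂ (Fin n)), Complex.finrank_real_complex,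
      finrank_euclideanSpace_fin]
  rw [hE, LinearMap.det_id]; ring

lemma sum_range_three_exp (z : ℂ) :
    ∑ m ∈ Finset.range 3, z ^ m / m.factorial = 1 + z + z ^ 2 / 2 := by
  simp [Finset.sum_range_succ]

lemma sum_range_two_exp (z : ℂ) :
    ∑ m ∈ Finset.range 2, z ^ m / m.factorial = 1 + z := by
  simp [Finset.sum_range_succ]

-- second order estimate
lemma g_est1 (s t : ℝ) (hs0 : 0 < s) (hs1 : s ≤ 1) (ht : t ≠ 0) (ht1 : |t| ≤ 1) :
    ‖Complex.I * ((Complex.exp (-Complex.I * ((t * s : ℝ) : ℂ)) - 1) / (t : ℂ))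
      - s - t * (-(s ^ 2 / 2) * Complex.I)‖ ≤ s ^ 3 * t ^ 2 := by
  set z : ℂ := -Complex.I * ((t * s : ℝ) : ℂ) with hz
  have htC : (t : ℂ) ≠ 0 := by exact_mod_cast ht
  have hzabs : ‖z‖ = |t| * s := by
    simp [hz, Complex.norm_real, abs_mul, abs_of_pos hs0]
  have hz1 : ‖z‖ ≤ 1 := by
    rw [hzabs]
    calc |t| * s ≤ 1 * 1 := by
          apply mul_le_mul ht1 hs1 hs0.le zero_le_one
      _ = 1 := one_mul 1
  have key : Complex.I * ((Complex.exp z - 1) / (t : ℂ)) - s - t * (-(s ^ 2 / 2) * Complex.I)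
      = Complex.I * ((Complex.exp z - (1 + z + z ^ 2 / 2)) / (t : ℂ)) := by
    rw [hz]
    push_cast
    field_simp
    linear_combination (Complex.I * (t:ℂ) ^ 2 * (s:ℂ) ^ 2 - 2 * (t:ℂ) * (s:ℂ)) * Complex.I_sq
  rw [key]
  have hb := Complex.exp_bound hz1 (n := 3) (by norm_num)
  rw [sum_range_three_exp] at hb
  have h1 : ‖Complex.I * ((Complex.exp z - (1 + z + z ^ 2 / 2)) / (t : ℂ))‖
      = ‖Complex.exp z - (1 + z + z ^ 2 / 2)‖ / |t| := by
    simp [map_mul, map_div₀, Complex.norm_real]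
  rw [h1]
  rw [div_le_iff₀ (abs_pos.mpr ht)]
  calc ‖Complex.exp z - (1 + z + z ^ 2 / 2)‖
      ≤ ‖z‖ ^ 3 * ((3 : ℕ).succ * (((3:ℕ).factorial * 3 : ℝ))⁻¹) := hb
    _ = (|t| * s) ^ 3 * (2 / 9) := by rw [hzabs]; norm_num [Nat.factorial]
    _ ≤ (|t| * s) ^ 3 * 1 := by
        apply mul_le_mul_of_nonneg_left (by norm_num) (by positivity)
    _ = |t| ^ 3 * s ^ 3 := by ring
    _ = (s ^ 3 * t ^ 2) * |t| := by
        rw [show |t| ^ 3 = t ^ 2 * |t| by rw [pow_succ, sq_abs]]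
        ring

-- first order estimate
lemma g_est2 (s t : ℝ) (hs0 : 0 < s) (hs1 : s ≤ 1) (ht : t ≠ 0) (ht1 : |t| ≤ 1) :
    ‖Complex.I * ((Complex.exp (-Complex.I * ((t * s : ℝ) : ℂ)) - 1) / (t : ℂ))
      - s‖ ≤ s ^ 2 * |t| := by
  set z : ℂ := -Complex.I * ((t * s : ℝ) : ℂ) with hz
  have htC : (t : ℂ) ≠ 0 := by exact_mod_cast ht
  have hzabs : ‖z‖ = |t| * s := by
    simp [hz, Complex.norm_real, abs_mul, abs_of_pos hs0]
  have hz1 : ‖z‖ ≤ 1 := by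
    rw [hzabs]
    calc |t| * s ≤ 1 * 1 := by
          apply mul_le_mul ht1 hs1 hs0.le zero_le_one
      _ = 1 := one_mul 1
  have key : Complex.I * ((Complex.exp z - 1) / (t : ℂ)) - s
      = Complex.I * ((Complex.exp z - (1 + z)) / (t : ℂ)) := by
    rw [hz]
    push_cast
    field_simp
    linear_combination (-(t:ℂ) * (s:ℂ)) * Complex.I_sq
  rw [key]
  have hb := Complex.exp_bound hz1 (n := 2) (by norm_num)
  rw [sum_range_two_exp] at hb
  have h1 : ‖Complex.I * ((Complex.exp z - (1 + z)) / (t : ℂ))‖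
      = ‖Complex.exp z - (1 + z)‖ / |t| := by
    simp [map_mul, map_div₀, Complex.norm_real]
  rw [h1, div_le_iff₀ (abs_pos.mpr ht)]
  calc ‖Complex.exp z - (1 + z)‖
      ≤ ‖z‖ ^ 2 * ((2 : ℕ).succ * (((2:ℕ).factorial * 2 : ℝ))⁻¹) := hb
    _ = (|t| * s) ^ 2 * (3 / 4) := by rw [hzabs]; norm_num [Nat.factorial]
    _ ≤ (|t| * s) ^ 2 * 1 := by
        apply mul_le_mul_of_nonneg_left (by norm_num) (by positivity)
    _ = s ^ 2 * |t| * |t| := by rw [mul_one]; ring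

-- sin estimate
lemma sin_est (s t : ℝ) (hs0 : 0 < s) (hs1 : s ≤ 1) (ht : t ≠ 0) (ht1 : |t| ≤ 1) :
    |(t * s - Real.sin (t * s)) / t ^ 2 - t * s ^ 3 / 6| ≤ s ^ 4 * t ^ 2 := by
  have hx1 : |t * s| ≤ 1 := by
    rw [abs_mul, abs_of_pos hs0]
    calc |t| * s ≤ 1 * 1 := mul_le_mul ht1 hs1 hs0.le zero_le_one
      _ = 1 := one_mul 1
  have hb := Real.sin_bound hx1
  have ht2 : (0:ℝ) < t ^ 2 := by positivity
  have key : (t * s - Real.sin (t * s)) / t ^ 2 - t * s ^ 3 / 6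
      = -((Real.sin (t * s) - (t * s - (t * s) ^ 3 / 6)) / t ^ 2) := by
    field_simp
    ring
  rw [key, abs_neg, abs_div, abs_of_pos ht2, div_le_iff₀ ht2]
  calc |Real.sin (t * s) - (t * s - (t * s) ^ 3 / 6)| ≤ |t * s| ^ 4 * (5 / 96) :=
      hb.trans (by rw [pow_succ]; nlinarith [pow_nonneg (abs_nonneg (t * s)) 4, hx1])
    _ ≤ |t * s| ^ 4 * 1 := mul_le_mul_of_nonneg_left (by norm_num) (by positivity)
    _ = t ^ 4 * s ^ 4 := by
        rw [mul_one, abs_mul, mul_pow, abs_of_pos hs0, ← abs_pow,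
          abs_of_nonneg (by positivity : (0:ℝ) ≤ t ^ 4)]
    _ = s ^ 4 * t ^ 2 * t ^ 2 := by ring


end

/-- The geodesic-endpoint map `Γ_s^ε : ℂⁿ × ℝ → ℂⁿ × ℝ` of the Riemannian approximation
`M^ε` of the Heisenberg group `ℍⁿ`. -/
noncomputable def heisenbergGamma (n : ℕ) (s ε : ℝ)
    (p : EuclideanSpace ℂ (Fin n) × ℝ) : EuclideanSpace ℂ (Fin n) × ℝ :=
  if p.2 = 0 then ((s : ℂ) • p.1, 0)
  else
    ((Complex.I * ((Complex.exp (-Complex.I * ((p.2 * s : ℝ) : ℂ)) - 1) / ((p.2 : ℝ) : ℂ))) • p.1,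
      ε ^ 2 * (p.2 * s) / 4 + 2 * ‖p.1‖ ^ 2 * (p.2 * s - Real.sin (p.2 * s)) / p.2 ^ 2)

set_option maxHeartbeats 1000000 in
/-- For `n ≥ 1`, `s ∈ (0,1]`, `ε ≥ 0` and `χ ∈ ℂⁿ`, the map `Γ_s^ε` is differentiable at
`(χ,0)` and the determinant of its (real) Fréchet derivative equals
`s^{2n+3} |χ|²/3 + s^{2n+1} ε²/4`. -/
theorem heisenbergGamma_jacobian_at_zero (n : ℕ) (hn : 1 ≤ n) (s ε : ℝ)
    (hs : s ∈ Set.Ioc (0 : ℝ) 1) (hε : 0 ≤ ε) (χ : EuclideanSpace ℂ (Fin n)) :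
    DifferentiableAt ℝ (heisenbergGamma n s ε) (χ, 0) ∧
      LinearMap.det (fderiv ℝ (heisenbergGamma n s ε) (χ, 0)).toLinearMap =
        s ^ (2 * n + 3) * ‖χ‖ ^ 2 / 3 + s ^ (2 * n + 1) * ε ^ 2 / 4 := by
  obtain ⟨hs0, hs1⟩ := hs
  have hL : HasFDerivAt (heisenbergGamma n s ε)
      (((s • ContinuousLinearMap.fst ℝ (EuclideanSpace ℂ (Fin n)) ℝ) +
        (ContinuousLinearMap.snd ℝ (EuclideanSpace ℂ (Fin n)) ℝ).smulRight
          ((-(s ^ 2 / 2) * Complex.I) • χ)).prod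
        ((ε ^ 2 * s / 4 + s ^ 3 * ‖χ‖ ^ 2 / 3) •
          ContinuousLinearMap.snd ℝ (EuclideanSpace ℂ (Fin n)) ℝ)) (χ, 0) := by
    rw [hasFDerivAt_iff_isLittleO_nhds_zero]
    have big : (fun h : EuclideanSpace ℂ (Fin n) × ℝ =>
        heisenbergGamma n s ε ((χ, 0) + h) - heisenbergGamma n s ε (χ, 0) -
          (((s • ContinuousLinearMap.fst ℝ (EuclideanSpace ℂ (Fin n)) ℝ) +
            (ContinuousLinearMap.snd ℝ (EuclideanSpace ℂ (Fin n)) ℝ).smulRight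
              ((-(s ^ 2 / 2) * Complex.I) • χ)).prod
            ((ε ^ 2 * s / 4 + s ^ 3 * ‖χ‖ ^ 2 / 3) •
              ContinuousLinearMap.snd ℝ (EuclideanSpace ℂ (Fin n)) ℝ)) h)
        =O[nhds 0] (fun h => ‖h‖ ^ 2) := by
      rw [Asymptotics.isBigO_iff]
      refine ⟨(‖χ‖ + 1) + (2 * (‖χ‖ + 1) ^ 2 + (2 * ‖χ‖ + 1)), ?_⟩
      filter_upwards [Metric.ball_mem_nhds (0 : EuclideanSpace ℂ (Fin n) × ℝ) one_pos]
      rintro ⟨v, t⟩ hh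
      have hN1 : ‖((v, t) : EuclideanSpace ℂ (Fin n) × ℝ)‖ < 1 := by
        simpa [mem_ball_zero_iff] using hh
      have hvN : ‖v‖ ≤ ‖((v, t) : EuclideanSpace ℂ (Fin n) × ℝ)‖ := by
        rw [Prod.norm_def]; exact le_max_left _ _
      have htN : |t| ≤ ‖((v, t) : EuclideanSpace ℂ (Fin n) × ℝ)‖ := by
        rw [Prod.norm_def, ← Real.norm_eq_abs]; exact le_max_right _ _
      have hN0 : (0:ℝ) ≤ ‖((v, t) : EuclideanSpace ℂ (Fin n) × ℝ)‖ := norm_nonneg _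
      rw [Real.norm_eq_abs (‖_‖ ^ 2), abs_of_nonneg (by positivity)]
      by_cases htz : t = 0
      · subst htz
        have e0 : ((χ, (0:ℝ)) : EuclideanSpace ℂ (Fin n) × ℝ) + (v, 0) = (χ + v, 0) := by
          simp
        have e1 : heisenbergGamma n s ε ((χ, 0) + (v, 0)) -
            heisenbergGamma n s ε (χ, 0) -
            (((s • ContinuousLinearMap.fst ℝ (EuclideanSpace ℂ (Fin n)) ℝ) +
              (ContinuousLinearMap.snd ℝ (EuclideanSpace ℂ (Fin n)) ℝ).smulRight
                ((-(s ^ 2 / 2) * Complex.I) • χ)).prod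
              ((ε ^ 2 * s / 4 + s ^ 3 * ‖χ‖ ^ 2 / 3) •
                ContinuousLinearMap.snd ℝ (EuclideanSpace ℂ (Fin n)) ℝ)) (v, 0) = 0 := by
          rw [e0]
          simp only [heisenbergGamma, if_pos rfl]
          simp [Prod.ext_iff, smul_add, Complex.coe_smul, Prod.sub_def]
        rw [e1, norm_zero]
        positivity
      · have ht1 : |t| ≤ 1 := le_of_lt (lt_of_le_of_lt htN hN1)
        have hv1 : ‖v‖ ≤ 1 := le_of_lt (lt_of_le_of_lt hvN hN1)
        have hA := g_est1 s t hs0 hs1 htz ht1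
        have hA2 := g_est2 s t hs0 hs1 htz ht1
        have hB := sin_est s t hs0 hs1 htz ht1
        set gval : ℂ :=
          Complex.I * ((Complex.exp (-Complex.I * ((t * s : ℝ) : ℂ)) - 1) / (t : ℂ)) with hgval
        have e1 : heisenbergGamma n s ε ((χ, 0) + (v, t)) -
            heisenbergGamma n s ε (χ, 0) -
            (((s • ContinuousLinearMap.fst ℝ (EuclideanSpace ℂ (Fin n)) ℝ) +
              (ContinuousLinearMap.snd ℝ (EuclideanSpace ℂ (Fin n)) ℝ).smulRight
                ((-(s ^ 2 / 2) * Complex.I) • χ)).prod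
              ((ε ^ 2 * s / 4 + s ^ 3 * ‖χ‖ ^ 2 / 3) •
                ContinuousLinearMap.snd ℝ (EuclideanSpace ℂ (Fin n)) ℝ)) (v, t) =
            ((gval - s - t * (-(s ^ 2 / 2) * Complex.I)) • χ + (gval - (s:ℂ)) • v,
             2 * ‖χ + v‖ ^ 2 * ((t * s - Real.sin (t * s)) / t ^ 2 - t * s ^ 3 / 6) +
               (‖χ + v‖ ^ 2 - ‖χ‖ ^ 2) * (t * s ^ 3 / 3)) := by
          have e2 : heisenbergGamma n s ε ((χ, 0) + (v, t)) =
              (gval • (χ + v),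
                ε ^ 2 * (t * s) / 4 + 2 * ‖χ + v‖ ^ 2 * (t * s - Real.sin (t * s)) / t ^ 2) := by
            simp [heisenbergGamma, htz, hgval]
          have e3 : heisenbergGamma n s ε (χ, 0) = ((s:ℂ) • χ, 0) := by
            simp [heisenbergGamma]
          rw [e2, e3]
          simp only [ContinuousLinearMap.prod_apply, ContinuousLinearMap.add_apply,
            ContinuousLinearMap.coe_smul', Pi.smul_apply, ContinuousLinearMap.coe_fst',
            ContinuousLinearMap.smulRight_apply, ContinuousLinearMap.coe_snd', smul_eq_mul]
          rw [Prod.mk_sub_mk, Prod.mk_sub_mk]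
          refine Prod.ext ?_ ?_
          · show gval • (χ + v) - (s:ℂ) • χ - (s • v + t • ((-(s ^ 2 / 2) * Complex.I) • χ)) = _
            match_scalars <;> simp only [Complex.coe_algebraMap] <;> ring
          · show ε ^ 2 * (t * s) / 4 + 2 * ‖χ + v‖ ^ 2 * (t * s - Real.sin (t * s)) / t ^ 2 - 0 -
              (ε ^ 2 * s / 4 + s ^ 3 * ‖χ‖ ^ 2 / 3) * t = _
            field_simp
            ring
        rw [e1]
        rw [Prod.norm_def]
        set N : ℝ := ‖((v, t) : EuclideanSpace ℂ (Fin n) × ℝ)‖ with hNdef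
        have htsq : t ^ 2 ≤ N ^ 2 := by
          rw [← sq_abs]
          exact pow_le_pow_left₀ (abs_nonneg t) htN 2
        have hvt : |t| * ‖v‖ ≤ N ^ 2 := by
          calc |t| * ‖v‖ ≤ N * N := mul_le_mul htN hvN (norm_nonneg v) hN0
            _ = N ^ 2 := (sq N).symm
        apply max_le
        · -- first component
          have b1 : ‖(gval - s - t * (-(s ^ 2 / 2) * Complex.I)) • χ + (gval - (s:ℂ)) • v‖ ≤
              s ^ 3 * t ^ 2 * ‖χ‖ + s ^ 2 * |t| * ‖v‖ := by
            calc ‖(gval - s - t * (-(s ^ 2 / 2) * Complex.I)) • χ + (gval - (s:ℂ)) • v‖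
                ≤ ‖(gval - s - t * (-(s ^ 2 / 2) * Complex.I)) • χ‖ + ‖(gval - (s:ℂ)) • v‖ :=
                  norm_add_le _ _
              _ = ‖gval - s - t * (-(s ^ 2 / 2) * Complex.I)‖ * ‖χ‖ +
                  ‖gval - (s:ℂ)‖ * ‖v‖ := by
                  rw [norm_smul, norm_smul]
              _ ≤ s ^ 3 * t ^ 2 * ‖χ‖ + s ^ 2 * |t| * ‖v‖ :=
                  add_le_add (mul_le_mul_of_nonneg_right hA (norm_nonneg χ))
                    (mul_le_mul_of_nonneg_right hA2 (norm_nonneg v))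
          refine b1.trans ?_
          have hs3 : s ^ 3 ≤ 1 := pow_le_one₀ hs0.le hs1
          have hs2 : s ^ 2 ≤ 1 := pow_le_one₀ hs0.le hs1
          have hχ0 : (0:ℝ) ≤ ‖χ‖ := norm_nonneg χ
          have step1 : s ^ 3 * t ^ 2 * ‖χ‖ ≤ N ^ 2 * ‖χ‖ := by
            apply mul_le_mul_of_nonneg_right _ hχ0
            calc s ^ 3 * t ^ 2 ≤ 1 * t ^ 2 := mul_le_mul_of_nonneg_right hs3 (sq_nonneg t)
              _ = t ^ 2 := one_mul _
              _ ≤ N ^ 2 := htsq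
          have step2 : s ^ 2 * |t| * ‖v‖ ≤ N ^ 2 := by
            calc s ^ 2 * |t| * ‖v‖ ≤ 1 * |t| * ‖v‖ :=
                mul_le_mul_of_nonneg_right
                  (mul_le_mul_of_nonneg_right hs2 (abs_nonneg t)) (norm_nonneg v)
              _ = |t| * ‖v‖ := by ring
              _ ≤ N ^ 2 := hvt
          have hnn : (0:ℝ) ≤ (2 * (‖χ‖ + 1) ^ 2 + (2 * ‖χ‖ + 1)) * N ^ 2 := by positivity
          nlinarith [step1, step2, hnn]
        · -- second component
          have hxv : ‖χ + v‖ ≤ ‖χ‖ + 1 := by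
            calc ‖χ + v‖ ≤ ‖χ‖ + ‖v‖ := norm_add_le _ _
              _ ≤ ‖χ‖ + 1 := by linarith
          have hxvsq : ‖χ + v‖ ^ 2 ≤ (‖χ‖ + 1) ^ 2 :=
            pow_le_pow_left₀ (norm_nonneg _) hxv 2
          have hdiff : |‖χ + v‖ ^ 2 - ‖χ‖ ^ 2| ≤ (2 * ‖χ‖ + 1) * ‖v‖ := by
            have h1 : ‖χ + v‖ ^ 2 - ‖χ‖ ^ 2 = (‖χ + v‖ - ‖χ‖) * (‖χ + v‖ + ‖χ‖) := by ring
            rw [h1, abs_mul]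
            have h2 : |‖χ + v‖ - ‖χ‖| ≤ ‖v‖ := by
              have := abs_norm_sub_norm_le (χ + v) χ
              simpa using this
            have h3 : |‖χ + v‖ + ‖χ‖| ≤ 2 * ‖χ‖ + 1 := by
              rw [abs_of_nonneg (by positivity)]
              linarith
            calc |‖χ + v‖ - ‖χ‖| * |‖χ + v‖ + ‖χ‖| ≤ ‖v‖ * (2 * ‖χ‖ + 1) :=
                mul_le_mul h2 h3 (abs_nonneg _) (norm_nonneg _)
              _ = (2 * ‖χ‖ + 1) * ‖v‖ := by ring
          have b2 : ‖2 * ‖χ + v‖ ^ 2 * ((t * s - Real.sin (t * s)) / t ^ 2 - t * s ^ 3 / 6) +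
              (‖χ + v‖ ^ 2 - ‖χ‖ ^ 2) * (t * s ^ 3 / 3)‖ ≤
              2 * (‖χ‖ + 1) ^ 2 * (s ^ 4 * t ^ 2) + (2 * ‖χ‖ + 1) * ‖v‖ * (|t| / 3) := by
            rw [Real.norm_eq_abs]
            calc |2 * ‖χ + v‖ ^ 2 * ((t * s - Real.sin (t * s)) / t ^ 2 - t * s ^ 3 / 6) +
                (‖χ + v‖ ^ 2 - ‖χ‖ ^ 2) * (t * s ^ 3 / 3)|
                ≤ |2 * ‖χ + v‖ ^ 2 * ((t * s - Real.sin (t * s)) / t ^ 2 - t * s ^ 3 / 6)| +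
                  |(‖χ + v‖ ^ 2 - ‖χ‖ ^ 2) * (t * s ^ 3 / 3)| := abs_add_le _ _
              _ = 2 * ‖χ + v‖ ^ 2 * |(t * s - Real.sin (t * s)) / t ^ 2 - t * s ^ 3 / 6| +
                  |‖χ + v‖ ^ 2 - ‖χ‖ ^ 2| * (|t| * s ^ 3 / 3) := by
                  rw [abs_mul, abs_of_nonneg (by positivity : (0:ℝ) ≤ 2 * ‖χ + v‖ ^ 2),
                    abs_mul]
                  congr 1
                  rw [show t * s ^ 3 / 3 = t * (s ^ 3 / 3) by ring, abs_mul,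
                    abs_of_nonneg (by positivity : (0:ℝ) ≤ s ^ 3 / 3)]
                  ring
              _ ≤ 2 * (‖χ‖ + 1) ^ 2 * (s ^ 4 * t ^ 2) +
                  ((2 * ‖χ‖ + 1) * ‖v‖) * (|t| * 1 / 3) := by
                  gcongr <;> first
                    | exact hxvsq | exact hB | exact hdiff
                    | exact pow_le_one₀ hs0.le hs1 | positivity
              _ = 2 * (‖χ‖ + 1) ^ 2 * (s ^ 4 * t ^ 2) + (2 * ‖χ‖ + 1) * ‖v‖ * (|t| / 3) := by
                  ring
          refine b2.trans ?_
          have hs4 : s ^ 4 ≤ 1 := pow_le_one₀ hs0.le hs1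
          have hχ0 : (0:ℝ) ≤ ‖χ‖ := norm_nonneg χ
          have step1 : 2 * (‖χ‖ + 1) ^ 2 * (s ^ 4 * t ^ 2) ≤ 2 * (‖χ‖ + 1) ^ 2 * N ^ 2 := by
            apply mul_le_mul_of_nonneg_left _ (by positivity)
            calc s ^ 4 * t ^ 2 ≤ 1 * t ^ 2 := mul_le_mul_of_nonneg_right hs4 (sq_nonneg t)
              _ = t ^ 2 := one_mul _
              _ ≤ N ^ 2 := htsq
          have step2 : (2 * ‖χ‖ + 1) * ‖v‖ * (|t| / 3) ≤ (2 * ‖χ‖ + 1) * N ^ 2 := by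
            rw [mul_assoc]
            apply mul_le_mul_of_nonneg_left _ (by positivity)
            calc ‖v‖ * (|t| / 3) ≤ ‖v‖ * |t| :=
                mul_le_mul_of_nonneg_left (by linarith [abs_nonneg t]) (norm_nonneg v)
              _ = |t| * ‖v‖ := mul_comm _ _
              _ ≤ N ^ 2 := hvt
          have hnn : (0:ℝ) ≤ (‖χ‖ + 1) * N ^ 2 := by positivity
          nlinarith [step1, step2, hnn]
    exact big.trans_isLittleO (Asymptotics.isLittleO_norm_pow_id one_lt_two)
  refine ⟨hL.differentiableAt, ?_⟩
  rw [hL.fderiv, det_L_aux s (ε ^ 2 * s / 4 + s ^ 3 * ‖χ‖ ^ 2 / 3) (ne_of_gt hs0)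
    ((-(s ^ 2 / 2) * Complex.I) • χ)]
  rw [pow_add, pow_add]
  ring
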